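/- The double integral ∬_{[0,1]²} (1−x)/((1−xy)(−ln(xy))) dx dy equals the Euler–Mascheroni constant γ. -/

import Mathlib

open Real MeasureTheory Set Filter Topology intervalIntegral


noncomputable def gg : ℝ → ℝ := fun u => ((1 - u) * (-Real.log u))⁻¹
noncomputable def FF : ℝ → ℝ := fun x => ∫ u in (0:ℝ)..x, gg u
noncomputable def hh : ℝ → ℝ := fun x => 1/(1-x) + 1/Real.log x

lemma gg_meas : Measurable gg :=
  ((measurable_const.sub measurable_id).mul Real.measurable_log.neg).inv

lemma neg_log_pos {u : ℝ} (h0 : 0 < u) (h1 : u < 1) : 0 < -Real.log u := by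
  simpa using Real.log_neg h0 h1

lemma one_sub_le_neg_log {u : ℝ} (h0 : 0 < u) : 1 - u ≤ -Real.log u := by
  have := Real.log_le_sub_one_of_pos h0; linarith

lemma neg_log_le {u : ℝ} (h0 : 0 < u) : -Real.log u ≤ (1 - u) / u := by
  have h := Real.one_sub_inv_le_log_of_pos h0
  have h2 : -Real.log u ≤ u⁻¹ - 1 := by linarith
  calc -Real.log u ≤ u⁻¹ - 1 := h2
    _ = (1 - u)/u := by field_simp

lemma gg_nonneg {u : ℝ} (h0 : 0 ≤ u) (h1 : u ≤ 1) : 0 ≤ gg u := by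
  rcases eq_or_lt_of_le h0 with h|h
  · simp [gg, ← h]
  rcases eq_or_lt_of_le h1 with h'|h'
  · simp [gg, h']
  exact le_of_lt (inv_pos.2 (mul_pos (by linarith) (neg_log_pos h h')))

lemma gg_le_sq {u : ℝ} (h0 : 0 < u) (h1 : u < 1) : gg u ≤ ((1-u)^2)⁻¹ := by
  have h2 : (0:ℝ) < 1 - u := by linarith
  have h3 := one_sub_le_neg_log h0
  have h4 : (1-u)^2 ≤ (1-u) * (-Real.log u) := by nlinarith
  exact inv_anti₀ (by positivity) h4

lemma gg_integrableOn {a b : ℝ} (ha : 0 ≤ a) (hb : b < 1) :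
    IntegrableOn gg (Ioc a b) := by
  apply Measure.integrableOn_of_bounded (M := ((1-b)*(1-b))⁻¹)
  · exact ((measure_Ioc_lt_top).ne)
  · exact (gg_meas.aestronglyMeasurable)
  · filter_upwards [ae_restrict_mem measurableSet_Ioc] with u hu
    have h0 : 0 < u := lt_of_le_of_lt ha hu.1
    have h1 : u < 1 := lt_of_le_of_lt hu.2 hb
    have hb0 : (0:ℝ) < 1 - b := by linarith
    rw [Real.norm_eq_abs, abs_of_nonneg (gg_nonneg h0.le h1.le)]
    have h3 : 1 - b ≤ -Real.log u :=
      le_trans (by linarith [hu.2]) (one_sub_le_neg_log h0)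
    have h4 : (1-b)*(1-b) ≤ (1-u) * (-Real.log u) := by
      have : 1 - b ≤ 1 - u := by linarith [hu.2]
      nlinarith [neg_log_pos h0 h1]
    exact inv_anti₀ (by positivity) h4

lemma gg_intInt {a b : ℝ} (ha : 0 ≤ a) (ha' : 0 ≤ b) (hb : a < 1) (hb' : b < 1) :
    IntervalIntegrable gg volume a b := by
  rcases le_or_gt a b with h|h
  · exact (intervalIntegrable_iff_integrableOn_Ioc_of_le h).2 (gg_integrableOn ha hb')
  · exact ((intervalIntegrable_iff_integrableOn_Ioc_of_le h.le).2 (gg_integrableOn ha' hb)).symm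



lemma intInt_sq {x : ℝ} (hx0 : 0 ≤ x) (hx1 : x < 1) :
    ∫ u in (0:ℝ)..x, ((1-u)^2)⁻¹ = x/(1-x) := by
  have key : ∀ u ∈ uIcc (0:ℝ) x, HasDerivAt (fun u => (1-u)⁻¹) (((1-u)^2)⁻¹) u := by
    intro u hu
    rw [uIcc_of_le hx0] at hu
    have h1 : u < 1 := lt_of_le_of_lt hu.2 hx1
    have hne : (1:ℝ) - u ≠ 0 := by linarith
    have := ((hasDerivAt_id u).const_sub 1).inv hne
    exact this.congr_deriv (by simp)
  have hint : IntervalIntegrable (fun u => ((1-u)^2)⁻¹) volume 0 x := by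
    apply ContinuousOn.intervalIntegrable
    apply ((continuousOn_const.sub continuousOn_id).pow 2).inv₀
    intro u hu
    rw [uIcc_of_le hx0] at hu
    have h1 : u < 1 := lt_of_le_of_lt hu.2 hx1
    have : (1:ℝ) - u ≠ 0 := by linarith
    simpa using pow_ne_zero 2 this
  rw [intervalIntegral.integral_eq_sub_of_hasDerivAt key hint]
  have hne : (1:ℝ) - x ≠ 0 := by linarith
  field_simp
  ring

lemma FF_nonneg {x : ℝ} (h0 : 0 ≤ x) (h1 : x ≤ 1) : 0 ≤ FF x := by
  apply intervalIntegral.integral_nonneg h0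
  intro u hu
  exact gg_nonneg hu.1 (le_trans hu.2 h1)

lemma FF_le {x : ℝ} (h0 : 0 ≤ x) (h1 : x < 1) : FF x ≤ x / (1-x) := by
  rw [← intInt_sq h0 h1]
  apply intervalIntegral.integral_mono_on h0 (gg_intInt le_rfl h0 one_pos h1)
  · apply ContinuousOn.intervalIntegrable
    apply ((continuousOn_const.sub continuousOn_id).pow 2).inv₀
    intro u hu
    rw [uIcc_of_le h0] at hu
    have : u < 1 := lt_of_le_of_lt hu.2 h1
    have : (1:ℝ) - u ≠ 0 := by linarith
    simpa using pow_ne_zero 2 this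
  · intro u hu
    rcases eq_or_lt_of_le hu.1 with h|h
    · have : gg 0 = 0 := by simp [gg]
      rw [← h, this]; positivity
    · exact gg_le_sq h (lt_of_le_of_lt hu.2 h1)

lemma gg_contAt {x : ℝ} (h0 : 0 < x) (h1 : x < 1) : ContinuousAt gg x := by
  have hlog : -Real.log x ≠ 0 := by
    have : Real.log x < 0 := Real.log_neg h0 h1
    rw [neg_ne_zero]; exact ne_of_lt this
  apply ContinuousAt.inv₀
  · exact (continuousAt_const.sub continuousAt_id).mul
      (Real.continuousAt_log h0.ne').neg
  · apply mul_ne_zero (by norm_num; linarith) hlog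

lemma FF_hasDeriv {x : ℝ} (h0 : 0 < x) (h1 : x < 1) : HasDerivAt FF (gg x) x := by
  apply intervalIntegral.integral_hasDerivAt_right
    (gg_intInt le_rfl h0.le one_pos h1)
    gg_meas.stronglyMeasurable.stronglyMeasurableAtFilter
    (gg_contAt h0 h1)



lemma inner_eq {x : ℝ} (h0 : 0 < x) (h1 : x < 1) :
    (∫ y in (0:ℝ)..1, (1 - x) / ((1 - x * y) * (-Real.log (x * y))))
      = (x⁻¹ - 1) * FF x := by
  have : (∫ y in (0:ℝ)..1, (1 - x) / ((1 - x * y) * (-Real.log (x * y))))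
      = ∫ y in (0:ℝ)..1, (1 - x) * gg (x * y) := by
    apply intervalIntegral.integral_congr
    intro y _
    simp only [gg, div_eq_mul_inv]
  rw [this, intervalIntegral.integral_const_mul,
    intervalIntegral.integral_comp_mul_left gg h0.ne']
  simp only [mul_zero, mul_one, smul_eq_mul]
  show (1 - x) * (x⁻¹ * FF x) = (x⁻¹ - 1) * FF x
  field_simp

lemma hh_nonneg {x : ℝ} (h0 : 0 < x) (h1 : x < 1) : 0 ≤ hh x := by
  have ha : (0:ℝ) < 1 - x := by linarith
  have hL : 0 < -Real.log x := lt_of_lt_of_le ha (one_sub_le_neg_log h0)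
  have h2 : 1/(-Real.log x) ≤ 1/(1-x) :=
    one_div_le_one_div_of_le ha (one_sub_le_neg_log h0)
  have h3 : 1/Real.log x = -(1/(-Real.log x)) := by
    rw [one_div_neg_eq_neg_one_div]; ring
  rw [hh, h3]; linarith

lemma hh_le_one {x : ℝ} (h0 : 0 < x) (h1 : x < 1) : hh x ≤ 1 := by
  have ha : (0:ℝ) < 1 - x := by linarith
  have hL : 0 < -Real.log x := lt_of_lt_of_le ha (one_sub_le_neg_log h0)
  have h4 : (-Real.log x) * x ≤ 1 - x := by
    have := neg_log_le h0
    calc (-Real.log x) * x ≤ ((1-x)/x) * x := by nlinarith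
      _ = 1 - x := by field_simp
  have h3 : 1/Real.log x = -(1/(-Real.log x)) := by
    rw [one_div_neg_eq_neg_one_div]; ring
  rw [hh, h3, ← sub_eq_add_neg]
  rw [div_sub_div _ _ (ne_of_gt ha) (ne_of_gt hL), div_le_one (by positivity)]
  nlinarith

lemma Hg_eq {x : ℝ} (h0 : 0 < x) (h1 : x < 1) :
    (Real.log x - x + 1) * gg x = -hh x := by
  have ha : (1:ℝ) - x ≠ 0 := by intro h; linarith
  have hL : Real.log x ≠ 0 := ne_of_lt (Real.log_neg h0 h1)
  simp only [gg, hh]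
  field_simp
  ring


noncomputable def HH : ℝ → ℝ := fun x => Real.log x - x + 1

lemma HH_hasDeriv {x : ℝ} (h0 : 0 < x) : HasDerivAt HH (x⁻¹ - 1) x := by
  have h1 := (Real.hasDerivAt_log h0.ne').sub (hasDerivAt_id x)
  unfold HH
  simpa [HH, sub_add_eq_sub_sub] using h1.add_const 1

lemma parts_eq {a b : ℝ} (ha : 0 < a) (hab : a ≤ b) (hb : b < 1) :
    ∫ x in a..b, FF x * (x⁻¹ - 1)
      = FF b * HH b - FF a * HH a - ∫ x in a..b, gg x * HH x := by
  apply intervalIntegral.integral_mul_deriv_eq_deriv_mul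
  · intro x hx
    rw [uIcc_of_le hab] at hx
    exact FF_hasDeriv (lt_of_lt_of_le ha hx.1) (lt_of_le_of_lt hx.2 hb)
  · intro x hx
    rw [uIcc_of_le hab] at hx
    exact HH_hasDeriv (lt_of_lt_of_le ha hx.1)
  · exact gg_intInt ha.le (le_trans ha.le hab) (lt_of_le_of_lt hab hb) hb
  · apply ContinuousOn.intervalIntegrable
    intro x hx
    rw [uIcc_of_le hab] at hx
    have hx0 : 0 < x := lt_of_lt_of_le ha hx.1
    exact ((continuousAt_inv₀ hx0.ne').sub continuousAt_const).continuousWithinAt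

-- abs bounds for boundary terms
lemma HH_nonpos {x : ℝ} (h0 : 0 < x) : HH x ≤ 0 := by
  have := Real.log_le_sub_one_of_pos h0; simp only [HH]; linarith

lemma boundary_bound {x : ℝ} (h0 : 0 < x) (h1 : x < 1) :
    |FF x * HH x| ≤ 1 - x := by
  have hF0 := FF_nonneg h0.le h1.le
  have hFle := FF_le h0.le h1
  have hxx : (0:ℝ) < 1 - x := by linarith
  have hHH := HH_nonpos h0
  have hlog := neg_log_le h0
  have habs : |FF x * HH x| = FF x * (-HH x) := by
    rw [abs_of_nonpos (mul_nonpos_of_nonneg_of_nonpos hF0 hHH)]; ring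
  rw [habs]
  have hnH : -HH x = (-Real.log x) + x - 1 := by simp [HH]; ring
  have hnHnn : 0 ≤ -HH x := by linarith [one_sub_le_neg_log h0]
  -- FF x * (-HH x) ≤ (x/(1-x)) * (-HH x)
  have step1 : FF x * (-HH x) ≤ (x/(1-x)) * (-HH x) :=
    mul_le_mul_of_nonneg_right hFle hnHnn
  -- and -log x ≤ (1-x)/x so -HH x ≤ (1-x)/x + x - 1 = (1-x)(1-x)/x
  have step2 : -HH x ≤ (1-x)*(1-x)/x := by
    rw [hnH]
    have key : (1-x)/x + x - 1 = (1-x)*(1-x)/x := by field_simp; ring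
    linarith
  calc FF x * (-HH x) ≤ (x/(1-x)) * ((1-x)*(1-x)/x) := by
        apply le_trans step1
        apply mul_le_mul_of_nonneg_left step2 (by positivity)
    _ = 1 - x := by field_simp


lemma boundary_bound0 {x : ℝ} (h0 : 0 < x) (h1 : x ≤ 1/2) :
    |FF x * HH x| ≤ 2 * (x * (-Real.log x)) := by
  have h1' : x < 1 := by linarith
  have hF0 := FF_nonneg h0.le h1'.le
  have hFle := FF_le h0.le h1'
  have hHH := HH_nonpos h0
  have hnHnn : 0 ≤ -HH x := by
    simp only [HH]; linarith [one_sub_le_neg_log h0]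
  have hlognn : 0 ≤ -Real.log x := by linarith [one_sub_le_neg_log h0]
  have habs : |FF x * HH x| = FF x * (-HH x) := by
    rw [abs_of_nonpos (mul_nonpos_of_nonneg_of_nonpos hF0 hHH)]; ring
  rw [habs]
  have hF2 : FF x ≤ 2 * x := by
    apply le_trans hFle
    rw [div_le_iff₀ (by linarith)]
    nlinarith
  have hnH : -HH x ≤ -Real.log x := by simp only [HH]; linarith
  calc FF x * (-HH x) ≤ (2*x) * (-Real.log x) :=
        mul_le_mul hF2 hnH hnHnn (by linarith)
    _ = 2 * (x * (-Real.log x)) := by ring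

noncomputable def aseq : ℕ → ℝ := fun n => ((n:ℝ)+2)⁻¹
noncomputable def bseq : ℕ → ℝ := fun n => 1 - ((n:ℝ)+2)⁻¹

lemma aseq_pos (n : ℕ) : 0 < aseq n := by rw [aseq]; positivity

lemma aseq_le_half (n : ℕ) : aseq n ≤ 1/2 := by
  rw [aseq, inv_le_comm₀ (by positivity) (by norm_num)]
  norm_num

lemma aseq_le_bseq (n : ℕ) : aseq n ≤ bseq n := by
  have := aseq_le_half n; simp only [bseq]; simp only [aseq] at this ⊢; linarith

lemma bseq_lt_one (n : ℕ) : bseq n < 1 := by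
  have := aseq_pos n; simp only [bseq]; simp only [aseq] at this ⊢; linarith

lemma aseq_anti : ∀ m n, m ≤ n → aseq n ≤ aseq m := by
  intro m n h
  simp only [aseq]
  apply inv_anti₀ (by positivity)
  have : (m:ℝ) ≤ (n:ℝ) := Nat.cast_le.2 h
  linarith

lemma tendsto_aseq : Filter.Tendsto aseq atTop (𝓝 0) := by
  unfold aseq
  exact tendsto_inv_atTop_zero.comp
    (Filter.tendsto_atTop_add_const_right _ 2 tendsto_natCast_atTop_atTop)

lemma sUnion_eq : (⋃ n, Ioo (aseq n) (bseq n)) = Ioo (0:ℝ) 1 := by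
  ext x
  simp only [mem_iUnion, mem_Ioo]
  constructor
  · rintro ⟨n, h1, h2⟩
    exact ⟨lt_trans (aseq_pos n) h1, lt_trans h2 (bseq_lt_one n)⟩
  · rintro ⟨h0, h1⟩
    obtain ⟨n, hn⟩ := exists_nat_gt (max x⁻¹ (1-x)⁻¹)
    refine ⟨n, ?_, ?_⟩
    · have hx : x⁻¹ < (n:ℝ) + 2 := by
        have := le_max_left x⁻¹ (1-x)⁻¹; linarith
      rw [aseq]
      exact (inv_lt_comm₀ h0 (by positivity)).1 hx
    · have hx : (1-x)⁻¹ < (n:ℝ) + 2 := by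
        have := le_max_right x⁻¹ (1-x)⁻¹; linarith
      have h1x : (0:ℝ) < 1 - x := by linarith
      have haux : aseq n < 1 - x := by
        rw [aseq]
        exact (inv_lt_comm₀ h1x (by positivity)).1 hx
      simp only [bseq]; simp only [aseq] at haux; linarith

lemma smono : Monotone (fun n => Ioo (aseq n) (bseq n)) := by
  intro m n h
  apply Ioo_subset_Ioo (aseq_anti m n h)
  have := aseq_anti m n h; simp only [bseq]; simp only [aseq] at this ⊢; linarith

lemma phi_cont : ContinuousOn (fun x => FF x * (x⁻¹ - 1)) (Ioo (0:ℝ) 1) := by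
  intro x hx
  apply ContinuousWithinAt.mul
  · exact ((FF_hasDeriv hx.1 hx.2).continuousAt).continuousWithinAt
  · exact (((continuousAt_inv₀ hx.1.ne').sub continuousAt_const)).continuousWithinAt

lemma phi_bounds {x : ℝ} (h0 : 0 < x) (h1 : x < 1) :
    0 ≤ FF x * (x⁻¹ - 1) ∧ FF x * (x⁻¹ - 1) ≤ 1 := by
  have hinv : x⁻¹ - 1 = (1-x)/x := by field_simp
  have hinv0 : 0 ≤ x⁻¹ - 1 := by
    rw [hinv]; apply div_nonneg (by linarith) h0.le
  constructor
  · exact mul_nonneg (FF_nonneg h0.le h1.le) hinv0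
  · calc FF x * (x⁻¹ - 1) ≤ (x/(1-x)) * (x⁻¹ - 1) :=
        mul_le_mul_of_nonneg_right (FF_le h0.le h1) hinv0
      _ = 1 := by
        rw [hinv]
        have hne : x ≠ 0 := h0.ne'
        have hne2 : (1:ℝ) - x ≠ 0 := by intro hc; linarith
        field_simp

lemma phi_integrable : IntegrableOn (fun x => FF x * (x⁻¹ - 1)) (Ioo (0:ℝ) 1) := by
  refine ⟨phi_cont.aestronglyMeasurable measurableSet_Ioo,
    HasFiniteIntegral.restrict_of_bounded (C := 1) measure_Ioo_lt_top ?_⟩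
  filter_upwards [ae_restrict_mem measurableSet_Ioo] with x hx
  rw [Real.norm_eq_abs, abs_of_nonneg (phi_bounds hx.1 hx.2).1]
  exact (phi_bounds hx.1 hx.2).2

lemma hh_meas : Measurable hh := by
  apply Measurable.add
  · exact (measurable_const.div (measurable_const.sub measurable_id))
  · exact measurable_const.div Real.measurable_log

lemma hh_integrable : IntegrableOn hh (Ioo (0:ℝ) 1) := by
  apply Measure.integrableOn_of_bounded (M := 1) (measure_Ioo_lt_top).ne
    hh_meas.aestronglyMeasurable
  filter_upwards [ae_restrict_mem measurableSet_Ioo] with x hx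
  rw [Real.norm_eq_abs, abs_of_nonneg (hh_nonneg hx.1 hx.2)]
  exact hh_le_one hx.1 hx.2

lemma tendsto_B : Filter.Tendsto (fun n => FF (bseq n) * HH (bseq n)) atTop (𝓝 0) := by
  apply squeeze_zero_norm ?_ tendsto_aseq
  intro n
  rw [Real.norm_eq_abs]
  have ha := aseq_le_half n
  have ha0 := aseq_pos n
  have h0 : 0 < bseq n := by simp only [bseq]; simp only [aseq] at ha ⊢; linarith
  have hbd := boundary_bound h0 (bseq_lt_one n)
  have : 1 - bseq n = aseq n := by simp only [bseq, aseq]; ring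
  linarith

lemma tendsto_A : Filter.Tendsto (fun n => FF (aseq n) * HH (aseq n)) atTop (𝓝 0) := by
  have hcomp : Filter.Tendsto (fun n : ℕ => Real.log ((n:ℝ)+2) / ((n:ℝ)+2)) atTop (𝓝 0) := by
    have h1 : Filter.Tendsto (fun x : ℝ => Real.log x / x) atTop (𝓝 0) :=
      Real.isLittleO_log_id_atTop.tendsto_div_nhds_zero
    exact h1.comp (Filter.tendsto_atTop_add_const_right _ 2 tendsto_natCast_atTop_atTop)
  apply squeeze_zero_norm ?_ (by simpa using hcomp.const_mul 2)
  intro n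
  rw [Real.norm_eq_abs]
  have hbd := boundary_bound0 (aseq_pos n) (aseq_le_half n)
  have hth : aseq n * (-Real.log (aseq n)) = Real.log ((n:ℝ)+2) / ((n:ℝ)+2) := by
    rw [aseq, Real.log_inv, neg_neg, inv_mul_eq_div]
  rw [hth] at hbd
  exact hbd

lemma key_parts : ∫ x in Ioo (0:ℝ) 1, FF x * (x⁻¹ - 1) = ∫ x in Ioo (0:ℝ) 1, hh x := by
  have hmeas : ∀ n, MeasurableSet (Ioo (aseq n) (bseq n)) := fun n => measurableSet_Ioo
  have h1 : Filter.Tendsto (fun n => ∫ x in Ioo (aseq n) (bseq n), FF x * (x⁻¹ - 1)) atTop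
      (𝓝 (∫ x in Ioo (0:ℝ) 1, FF x * (x⁻¹ - 1))) := by
    have := tendsto_setIntegral_of_monotone hmeas smono (sUnion_eq ▸ phi_integrable)
    rwa [sUnion_eq] at this
  have h2 : Filter.Tendsto (fun n => ∫ x in Ioo (aseq n) (bseq n), hh x) atTop
      (𝓝 (∫ x in Ioo (0:ℝ) 1, hh x)) := by
    have := tendsto_setIntegral_of_monotone hmeas smono (sUnion_eq ▸ hh_integrable)
    rwa [sUnion_eq] at this
  have heq : ∀ n, (∫ x in Ioo (aseq n) (bseq n), FF x * (x⁻¹ - 1))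
      = FF (bseq n) * HH (bseq n) - FF (aseq n) * HH (aseq n)
        + ∫ x in Ioo (aseq n) (bseq n), hh x := by
    intro n
    have hiv : ∀ f : ℝ → ℝ, (∫ x in (aseq n)..(bseq n), f x) = ∫ x in Ioo (aseq n) (bseq n), f x := by
      intro f
      rw [intervalIntegral.integral_of_le (aseq_le_bseq n), integral_Ioc_eq_integral_Ioo]
    rw [← hiv, parts_eq (aseq_pos n) (aseq_le_bseq n) (bseq_lt_one n)]
    have hcong : (∫ x in (aseq n)..(bseq n), gg x * HH x) = ∫ x in (aseq n)..(bseq n), -hh x := by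
      apply intervalIntegral.integral_congr
      intro x hx
      rw [uIcc_of_le (aseq_le_bseq n)] at hx
      have h0 : 0 < x := lt_of_lt_of_le (aseq_pos n) hx.1
      have h1 : x < 1 := lt_of_le_of_lt hx.2 (bseq_lt_one n)
      show gg x * HH x = -hh x
      rw [mul_comm]
      exact Hg_eq h0 h1
    rw [hcong, intervalIntegral.integral_neg, hiv]
    ring
  have h3 : Filter.Tendsto (fun n => ∫ x in Ioo (aseq n) (bseq n), FF x * (x⁻¹ - 1)) atTop
      (𝓝 (0 - 0 + ∫ x in Ioo (0:ℝ) 1, hh x)) := by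
    simp_rw [heq]
    exact ((tendsto_B.sub tendsto_A).add h2)
  have := tendsto_nhds_unique h1 h3
  simpa using this


lemma pow_integrableOn (i : ℕ) : IntegrableOn (fun x : ℝ => x ^ i) (Ioo (0:ℝ) 1) :=
  (continuous_pow i).continuousOn.integrableOn_compact isCompact_Icc |>.mono_set Ioo_subset_Icc_self

lemma int_pow_Ioo (i : ℕ) : ∫ x in Ioo (0:ℝ) 1, x ^ i = 1/(i+1) := by
  rw [← integral_Ioc_eq_integral_Ioo, ← intervalIntegral.integral_of_le zero_le_one,
    integral_pow]
  simp

lemma f1 (N : ℕ) : ∫ x in Ioo (0:ℝ) 1, (1 - x^N)/(1-x) = (harmonic N : ℝ) := by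
  have hcong : ∫ x in Ioo (0:ℝ) 1, (1 - x^N)/(1-x)
      = ∫ x in Ioo (0:ℝ) 1, ∑ i ∈ Finset.range N, x ^ i := by
    apply setIntegral_congr_fun measurableSet_Ioo
    intro x hx
    have hne : x ≠ 1 := ne_of_lt hx.2
    show (1 - x ^ N)/(1-x) = ∑ i ∈ Finset.range N, x ^ i
    rw [geom_sum_eq hne]
    rw [div_eq_div_iff (by intro h; apply hne; linarith [sub_eq_zero.1 h]) (by
      intro h; apply hne; linarith [sub_eq_zero.1 h])]
    ring
  rw [hcong, integral_finset_sum _ (fun i _ => pow_integrableOn i)]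
  have : (harmonic N : ℝ) = ∑ i ∈ Finset.range N, (1:ℝ)/(i+1) := by
    rw [harmonic]; push_cast
    exact Finset.sum_congr rfl (fun i _ => by rw [one_div])
  rw [this]
  exact Finset.sum_congr rfl (fun i _ => int_pow_Ioo i)

-- inner exp integral
lemma int_exp_mul {c : ℝ} (hc : c ≠ 0) (N : ℝ) :
    ∫ s in (0:ℝ)..N, Real.exp (c * s) = (Real.exp (c * N) - 1)/c := by
  have key : ∀ s ∈ uIcc (0:ℝ) N, HasDerivAt (fun s => Real.exp (c * s)/c) (Real.exp (c * s)) s := by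
    intro s _
    have h1 : HasDerivAt (fun s : ℝ => c * s) c s := by
      simpa using (hasDerivAt_id s).const_mul c
    have h2 := (Real.hasDerivAt_exp (c * s)).comp s h1
    have h3 := h2.div_const c
    simpa [mul_comm, mul_div_assoc, mul_div_cancel_left₀ _ hc] using h3
  rw [intervalIntegral.integral_eq_sub_of_hasDerivAt key
    (Continuous.intervalIntegrable (by continuity) _ _)]
  simp [mul_comm]
  ring

lemma rpow_inner {x : ℝ} (h0 : 0 < x) (h1 : x < 1) (N : ℕ) :
    ∫ s in Ioc (0:ℝ) (N:ℝ), x ^ s = (1 - x^N)/(-Real.log x) := by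
  have hc : Real.log x ≠ 0 := ne_of_lt (Real.log_neg h0 h1)
  have : ∫ s in Ioc (0:ℝ) (N:ℝ), x ^ s = ∫ s in (0:ℝ)..(N:ℝ), x ^ s := by
    rw [intervalIntegral.integral_of_le (Nat.cast_nonneg N)]
  rw [this]
  have hrw : ∀ s, x ^ s = Real.exp (Real.log x * s) := fun s => Real.rpow_def_of_pos h0 s
  simp_rw [hrw]
  rw [int_exp_mul hc]
  rw [← Real.rpow_natCast x N, Real.rpow_def_of_pos h0]
  rw [div_eq_div_iff hc (neg_ne_zero.2 hc)]
  ring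

lemma rpow_prod_integrable (N : ℕ) :
    Integrable (Function.uncurry fun (x s : ℝ) => x ^ s)
      ((volume.restrict (Ioo (0:ℝ) 1)).prod (volume.restrict (Ioc (0:ℝ) (N:ℝ)))) := by
  haveI h1 : IsFiniteMeasure (volume.restrict (Ioo (0:ℝ) 1)) :=
    ⟨by rw [Measure.restrict_apply_univ]; exact measure_Ioo_lt_top⟩
  haveI h2 : IsFiniteMeasure (volume.restrict (Ioc (0:ℝ) (N:ℝ))) :=
    ⟨by rw [Measure.restrict_apply_univ]; exact measure_Ioc_lt_top⟩
  constructor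
  · have hm : Measurable (fun p : ℝ × ℝ => Real.exp (Real.log p.1 * p.2)) :=
      ((Real.measurable_log.comp measurable_fst).mul measurable_snd).exp
    apply hm.aestronglyMeasurable.congr
    rw [Measure.prod_restrict]
    filter_upwards [ae_restrict_mem (measurableSet_Ioo.prod measurableSet_Ioc)] with p hp
    exact (Real.rpow_def_of_pos hp.1.1 _).symm
  · apply HasFiniteIntegral.of_bounded (C := 1)
    rw [Measure.prod_restrict]
    filter_upwards [ae_restrict_mem (measurableSet_Ioo.prod measurableSet_Ioc)] with p hp
    obtain ⟨hx, hs⟩ := hp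
    rw [Function.uncurry_apply_pair, Real.norm_eq_abs,
      abs_of_nonneg (Real.rpow_nonneg hx.1.le _)]
    exact Real.rpow_le_one hx.1.le hx.2.le hs.1.le

lemma int_one_div_add (N : ℕ) :
    ∫ s in Ioc (0:ℝ) (N:ℝ), 1/(s+1) = Real.log ((N:ℝ)+1) := by
  rw [← intervalIntegral.integral_of_le (Nat.cast_nonneg N)]
  have key : ∀ s ∈ uIcc (0:ℝ) (N:ℝ), HasDerivAt (fun s => Real.log (s+1)) (1/(s+1)) s := by
    intro s hs
    rw [uIcc_of_le (Nat.cast_nonneg N)] at hs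
    have hpos : (0:ℝ) < s + 1 := by linarith [hs.1]
    have h := (Real.hasDerivAt_log hpos.ne').comp s ((hasDerivAt_id s).add_const 1)
    simpa [one_div, Function.comp_def] using h
  rw [intervalIntegral.integral_eq_sub_of_hasDerivAt key]
  · simp
  · apply ContinuousOn.intervalIntegrable
    intro s hs
    rw [uIcc_of_le (Nat.cast_nonneg N)] at hs
    have hpos : (0:ℝ) < s + 1 := by linarith [hs.1]
    exact (continuousAt_const.div ((continuous_id.add continuous_const).continuousAt)
      hpos.ne').continuousWithinAt

lemma f2 (N : ℕ) : ∫ x in Ioo (0:ℝ) 1, (1 - x^N)/Real.log x = -Real.log ((N:ℝ)+1) := by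
  have h1 : ∫ x in Ioo (0:ℝ) 1, (1 - x^N)/(-Real.log x) = Real.log ((N:ℝ)+1) := by
    have hcong : ∫ x in Ioo (0:ℝ) 1, (1 - x^N)/(-Real.log x)
        = ∫ x in Ioo (0:ℝ) 1, ∫ s in Ioc (0:ℝ) (N:ℝ), x ^ s := by
      apply setIntegral_congr_fun measurableSet_Ioo
      intro x hx
      exact (rpow_inner hx.1 hx.2 N).symm
    rw [hcong, integral_integral_swap (rpow_prod_integrable N)]
    have hinner : ∀ s ∈ Ioc (0:ℝ) (N:ℝ), (∫ x in Ioo (0:ℝ) 1, x ^ s) = 1/(s+1) := by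
      intro s hs
      rw [← integral_Ioc_eq_integral_Ioo, ← intervalIntegral.integral_of_le zero_le_one,
        integral_rpow (Or.inl (by linarith [hs.1] : (-1:ℝ) < s))]
      rw [Real.one_rpow, Real.zero_rpow (by linarith [hs.1] : s + 1 ≠ 0)]
      ring
    rw [setIntegral_congr_fun measurableSet_Ioc hinner, int_one_div_add]
  have h2 : ∫ x in Ioo (0:ℝ) 1, (1 - x^N)/Real.log x
      = -∫ x in Ioo (0:ℝ) 1, (1 - x^N)/(-Real.log x) := by
    rw [← MeasureTheory.integral_neg]
    apply setIntegral_congr_fun measurableSet_Ioo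
    intro x _
    show (1 - x^N)/Real.log x = -((1 - x^N)/(-Real.log x))
    rw [div_neg, neg_neg]
  rw [h2, h1]

lemma one_sub_pow_nonneg {x : ℝ} (h0 : 0 ≤ x) (h1 : x ≤ 1) (N : ℕ) : 0 ≤ 1 - x^N := by
  have := pow_le_one₀ h0 h1 (n := N); linarith

lemma geo_bound {x : ℝ} (h0 : 0 ≤ x) (h1 : x ≤ 1) (N : ℕ) : 1 - x^N ≤ N * (1-x) := by
  have key : (1 - x) * ∑ i ∈ Finset.range N, x ^ i = 1 - x^N := by
    linear_combination -geom_sum_mul x N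
  have hsum : ∑ i ∈ Finset.range N, x ^ i ≤ N := by
    calc ∑ i ∈ Finset.range N, x ^ i ≤ ∑ i ∈ Finset.range N, 1 :=
          Finset.sum_le_sum (fun i _ => pow_le_one₀ h0 h1)
      _ = N := by simp
  nlinarith [Finset.sum_nonneg (fun i (_ : i ∈ Finset.range N) => pow_nonneg h0 i)]

lemma logdiv_integrable (N : ℕ) :
    IntegrableOn (fun x => (1 - x^N)/Real.log x) (Ioo (0:ℝ) 1) := by
  refine ⟨((measurable_const.sub (measurable_id.pow_const N)).div
    Real.measurable_log).aestronglyMeasurable,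
    HasFiniteIntegral.restrict_of_bounded (C := N) measure_Ioo_lt_top ?_⟩
  filter_upwards [ae_restrict_mem measurableSet_Ioo] with x hx
  have hL : 0 < -Real.log x := by
    have := Real.log_neg hx.1 hx.2; linarith
  have hnum := one_sub_pow_nonneg hx.1.le hx.2.le N
  have hval : (1 - x^N)/Real.log x = -((1 - x^N)/(-Real.log x)) := by
    rw [div_neg, neg_neg]
  rw [Real.norm_eq_abs, hval, abs_neg, abs_of_nonneg (by positivity)]
  rw [div_le_iff₀ hL]
  calc 1 - x^N ≤ N * (1-x) := geo_bound hx.1.le hx.2.le N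
    _ ≤ N * (-Real.log x) := by
      apply mul_le_mul_of_nonneg_left (one_sub_le_neg_log hx.1) (Nat.cast_nonneg N)

lemma geomdiv_integrable (N : ℕ) :
    IntegrableOn (fun x => (1 - x^N)/(1-x)) (Ioo (0:ℝ) 1) := by
  refine ⟨((measurable_const.sub (measurable_id.pow_const N)).div
    (measurable_const.sub measurable_id)).aestronglyMeasurable,
    HasFiniteIntegral.restrict_of_bounded (C := N) measure_Ioo_lt_top ?_⟩
  filter_upwards [ae_restrict_mem measurableSet_Ioo] with x hx
  have h1x : (0:ℝ) < 1 - x := by linarith [hx.2]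
  have hnum := one_sub_pow_nonneg hx.1.le hx.2.le N
  rw [Real.norm_eq_abs, abs_of_nonneg (by positivity)]
  rw [div_le_iff₀ h1x]
  calc 1 - x^N ≤ N * (1-x) := geo_bound hx.1.le hx.2.le N
    _ = N * (1-x) := rfl

lemma xNhh_integrable (N : ℕ) :
    IntegrableOn (fun x => x^N * hh x) (Ioo (0:ℝ) 1) := by
  refine ⟨((measurable_id.pow_const N).mul hh_meas).aestronglyMeasurable,
    HasFiniteIntegral.restrict_of_bounded (C := 1) measure_Ioo_lt_top ?_⟩
  filter_upwards [ae_restrict_mem measurableSet_Ioo] with x hx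
  rw [Real.norm_eq_abs,
    abs_of_nonneg (mul_nonneg (pow_nonneg hx.1.le N) (hh_nonneg hx.1 hx.2))]
  calc x^N * hh x ≤ 1 * 1 := by
        apply mul_le_mul (pow_le_one₀ hx.1.le hx.2.le) (hh_le_one hx.1 hx.2)
          (hh_nonneg hx.1 hx.2) one_pos.le
    _ = 1 := by ring

lemma cutoff (N : ℕ) : ∫ x in Ioo (0:ℝ) 1, hh x
    = ((harmonic N : ℝ) - Real.log ((N:ℝ)+1)) + ∫ x in Ioo (0:ℝ) 1, x^N * hh x := by
  have hsplit : ∫ x in Ioo (0:ℝ) 1, hh x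
      = ∫ x in Ioo (0:ℝ) 1,
          (((1 - x^N)/(1-x) + (1 - x^N)/Real.log x) + x^N * hh x) := by
    apply setIntegral_congr_fun measurableSet_Ioo
    intro x hx
    have h1x : (1:ℝ) - x ≠ 0 := by intro h; have := hx.2; linarith [sub_eq_zero.1 h]
    have hL : Real.log x ≠ 0 := ne_of_lt (Real.log_neg hx.1 hx.2)
    show hh x = ((1 - x^N)/(1-x) + (1 - x^N)/Real.log x) + x^N * hh x
    simp only [hh]
    field_simp
    ring
  have hAB : IntegrableOn (fun x => (1 - x^N)/(1-x) + (1 - x^N)/Real.log x) (Ioo (0:ℝ) 1) :=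
    (geomdiv_integrable N).add (logdiv_integrable N)
  rw [hsplit, integral_add hAB (xNhh_integrable N),
    integral_add (geomdiv_integrable N) (logdiv_integrable N), f1, f2]
  ring

lemma tendsto_rN : Filter.Tendsto (fun N : ℕ => ∫ x in Ioo (0:ℝ) 1, x^N * hh x)
    atTop (𝓝 0) := by
  apply squeeze_zero ?_ ?_ tendsto_one_div_add_atTop_nhds_zero_nat
  · intro N
    apply setIntegral_nonneg measurableSet_Ioo
    intro x hx
    exact mul_nonneg (pow_nonneg hx.1.le N) (hh_nonneg hx.1 hx.2)
  · intro N
    calc (∫ x in Ioo (0:ℝ) 1, x^N * hh x) ≤ ∫ x in Ioo (0:ℝ) 1, x^N := by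
          apply setIntegral_mono_on (xNhh_integrable N) (pow_integrableOn N) measurableSet_Ioo
          intro x hx
          calc x^N * hh x ≤ x^N * 1 :=
                mul_le_mul_of_nonneg_left (hh_le_one hx.1 hx.2) (pow_nonneg hx.1.le N)
            _ = x^N := by ring
      _ = 1/(N+1) := int_pow_Ioo N

lemma hh_int_eq_gamma : ∫ x in Ioo (0:ℝ) 1, hh x = Real.eulerMascheroniConstant := by
  have h1 : Filter.Tendsto (fun N : ℕ => ((harmonic N : ℝ) - Real.log ((N:ℝ)+1)))
      atTop (𝓝 Real.eulerMascheroniConstant) := Real.tendsto_harmonic_sub_log_add_one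
  have h2 : Filter.Tendsto (fun N : ℕ => ((harmonic N : ℝ) - Real.log ((N:ℝ)+1)))
      atTop (𝓝 ((∫ x in Ioo (0:ℝ) 1, hh x) - 0)) := by
    have : (fun N : ℕ => ((harmonic N : ℝ) - Real.log ((N:ℝ)+1)))
        = fun N : ℕ => (∫ x in Ioo (0:ℝ) 1, hh x) - ∫ x in Ioo (0:ℝ) 1, x^N * hh x := by
      funext N
      have := cutoff N
      linarith
    rw [this]
    exact Filter.Tendsto.sub tendsto_const_nhds tendsto_rN
  have := tendsto_nhds_unique h2 h1
  linarith


theorem double_integral_eq_gamma :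
    ∫ x in (0:ℝ)..1, ∫ y in (0:ℝ)..1,
        (1 - x) / ((1 - x * y) * (-Real.log (x * y)))
      = Real.eulerMascheroniConstant := by
  have hstep : (∫ x in (0:ℝ)..1, ∫ y in (0:ℝ)..1,
        (1 - x) / ((1 - x * y) * (-Real.log (x * y))))
      = ∫ x in Ioo (0:ℝ) 1, FF x * (x⁻¹ - 1) := by
    rw [intervalIntegral.integral_of_le zero_le_one, integral_Ioc_eq_integral_Ioo]
    apply setIntegral_congr_fun measurableSet_Ioo
    intro x hx
    show (∫ y in (0:ℝ)..1, (1 - x) / ((1 - x * y) * (-Real.log (x * y))))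
        = FF x * (x⁻¹ - 1)
    rw [inner_eq hx.1 hx.2, mul_comm]
  rw [hstep, key_parts, hh_int_eq_gamma]
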